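/- Let f : ℝ → ℝ be continuous and nonnegative, let m ≥ 1, and let x_1 < ... < x_m be real numbers. Then there exists a unique F ∈ C^m(ℝ) with F^(m) = f such that (-1)^{m+1-k} F(x) ≥ 0 for all x in J_k and all 1 ≤ k ≤ m+1, where J_1 = (-∞, x_1], J_k = (x_{k-1}, x_k] for 2 ≤ k ≤ m, and J_{m+1} = (x_m, ∞). -/

import Mathlib

open Finset intervalIntegral

noncomputable def antider (f : ℝ → ℝ) : ℕ → ℝ → ℝ
  | 0 => f
  | (n+1) => fun t => ∫ s in (0:ℝ)..t, antider f n s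

lemma antider_contDiff {f : ℝ → ℝ} (hf : Continuous f) : ∀ n : ℕ,
    Continuous (antider f n) ∧ ContDiff ℝ n (antider f n) ∧
      iteratedDeriv n (antider f n) = f
  | 0 => ⟨hf, by exact_mod_cast (contDiff_zero (𝕜 := ℝ)).mpr hf, by simp [antider]⟩
  | (n+1) => by
    obtain ⟨hc, hcd, hid⟩ := antider_contDiff hf n
    have hd : deriv (antider f (n+1)) = antider f n := by
      funext t; exact (hc.deriv_integral (antider f n) 0 t)
    have hdiff : Differentiable ℝ (antider f (n+1)) := fun t =>
      ((hc.integral_hasStrictDerivAt 0 t).hasDerivAt).differentiableAt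
    constructor
    · exact hdiff.continuous
    constructor
    · have : ((n:ℕ)+1 : WithTop ℕ∞) = ((n+1 : ℕ) : WithTop ℕ∞) := by push_cast; ring
      rw [← this, contDiff_succ_iff_deriv]
      refine ⟨hdiff, by simp, by rw [hd]; exact hcd⟩
    · rw [iteratedDeriv_succ', hd, hid]

open Finset Polynomial

lemma poly_contDiff (p : ℝ[X]) (n : ℕ∞) : ContDiff ℝ n (fun t => p.eval t) := by
  induction p using Polynomial.induction_on' with
  | add p q hp hq => simpa [eval_add] using hp.add hq
  | monomial k a =>
    simpa [eval_monomial] using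
      (contDiff_const.mul (contDiff_id.pow k) : ContDiff ℝ n (fun t : ℝ => a * t ^ k))

lemma poly_iteratedDeriv (p : ℝ[X]) (n : ℕ) :
    iteratedDeriv n (fun t => p.eval t) = fun t => (derivative^[n] p).eval t := by
  induction n generalizing p with
  | zero => simp
  | succ n ih =>
    rw [iteratedDeriv_succ', show deriv (fun t => p.eval t) = fun t => p.derivative.eval t from
      funext fun t => Polynomial.deriv p, ih, Function.iterate_succ_apply]

open Finset Set

lemma signed_mono {G : ℝ → ℝ} (hG : Differentiable ℝ G) (c : ℝ) {D : Set ℝ} (hD : Convex ℝ D)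
    (h' : ∀ s ∈ interior D, 0 ≤ c * deriv G s) : MonotoneOn (fun s => c * G s) D := by
  refine monotoneOn_of_deriv_nonneg hD ((continuous_const.mul hG.continuous).continuousOn)
    (((hG.const_mul c).differentiableOn)) (fun s hs => ?_)
  rw [deriv_const_mul c (hG s)]; exact h' s hs

lemma keyLemma : ∀ (n : ℕ) (G : ℝ → ℝ), ContDiff ℝ (n+1 : ℕ) G →
    (∀ t, 0 ≤ iteratedDeriv (n+1) G t) →
    ∀ y : ℕ → ℝ, (∀ a b, a < b → b ≤ n → y a < y b) →
    (∀ k ≤ n, G (y k) = 0) →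
    ∀ (t : ℝ) (j : ℕ), j ≤ n + 1 → (∀ k ≤ n, (y k < t ↔ k < j)) →
    0 ≤ (-1:ℝ)^(n+1-j) * G t := by
  intro n
  induction n with
  | zero =>
    intro G hG hG' y _ hy0 t j hj hchar
    have hdiff : Differentiable ℝ G := hG.differentiable (by simp)
    have hmono : Monotone G := monotone_of_deriv_nonneg hdiff (by
      intro s; have := hG' s; rwa [iteratedDeriv_one] at this)
    interval_cases j
    · have ht : t ≤ y 0 := le_of_not_gt (fun h => by simpa using (hchar 0 le_rfl).mp h)
      have : G t ≤ 0 := (hy0 0 le_rfl) ▸ hmono ht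
      simpa using this
    · have ht : y 0 < t := (hchar 0 le_rfl).mpr (by norm_num)
      have : 0 ≤ G t := (hy0 0 le_rfl) ▸ hmono ht.le
      simpa using this
  | succ n IH =>
    intro G hG hG' y hy hy0 t j hj hchar
    have hdiff : Differentiable ℝ G := hG.differentiable (by simp)
    have hyle : ∀ a b, a ≤ b → b ≤ n+1 → y a ≤ y b := by
      intro a b hab hb
      rcases eq_or_lt_of_le hab with rfl | h
      · exact le_rfl
      · exact (hy _ _ h hb).le
    have hGder : ContDiff ℝ (n+1 : ℕ) (deriv G) := by
      have h2 : ((n+2 : ℕ) : WithTop ℕ∞) = ((n+1 : ℕ) : WithTop ℕ∞) + 1 := by push_cast; ring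
      rw [h2] at hG
      exact (contDiff_succ_iff_deriv.mp hG).2.2
    have hGder' : ∀ s, 0 ≤ iteratedDeriv (n+1) (deriv G) s := by
      intro s; have := hG' s; rwa [iteratedDeriv_succ'] at this
    have hz : ∀ k ≤ n, ∃ c ∈ Ioo (y k) (y (k+1)), deriv G c = 0 := by
      intro k hk
      exact exists_deriv_eq_zero (hy k (k+1) (Nat.lt_succ_self k) (by omega))
        hdiff.continuous.continuousOn
        (by rw [hy0 k (by omega), hy0 (k+1) (by omega)])
    classical
    set z : ℕ → ℝ := fun k => if h : k ≤ n then (hz k h).choose else 0 with hzdef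
    have hzmem : ∀ k ≤ n, y k < z k ∧ z k < y (k+1) ∧ deriv G (z k) = 0 := by
      intro k hk
      have h1 := (hz k hk).choose_spec
      simp only [hzdef, dif_pos hk]
      exact ⟨h1.1.1, h1.1.2, h1.2⟩
    have hzmono : ∀ a b, a < b → b ≤ n → z a < z b := by
      intro a b hab hb
      calc z a < y (a+1) := (hzmem a (by omega)).2.1
        _ ≤ y b := hyle _ _ (by omega) (by omega)
        _ < z b := (hzmem b hb).1
    have hz0 : ∀ k ≤ n, deriv G (z k) = 0 := fun k hk => (hzmem k hk).2.2
    have key' := IH (deriv G) hGder hGder' z hzmono hz0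
    rcases Nat.eq_zero_or_pos j with rfl | hjpos
    · -- t ≤ y 0
      have ht : t ≤ y 0 := le_of_not_gt (fun h => by simpa using (hchar 0 (by omega)).mp h)
      have hmono := signed_mono hdiff ((-1:ℝ)^(n+1)) (convex_Iic (y 0)) (fun s hs => by
        rw [interior_Iic] at hs
        exact key' s 0 (by omega) (fun k hk => by
          constructor
          · intro h
            have hy0k : y 0 ≤ y k := hyle 0 k (by omega) (by omega)
            exact absurd h (lt_asymm ((hs.trans_le hy0k).trans (hzmem k hk).1))
          · omega))
      have h1 : ((-1:ℝ)^(n+1)) * G t ≤ ((-1:ℝ)^(n+1)) * G (y 0) :=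
        hmono (mem_Iic.mpr ht) (mem_Iic.mpr le_rfl) ht
      rw [hy0 0 (by omega), mul_zero] at h1
      have he : (n+2-0 : ℕ) = (n+1)+1 := by omega
      rw [he, pow_succ]
      nlinarith [h1]
    · rcases eq_or_lt_of_le hj with rfl | hjlt
      · -- j = n+2 : t > y (n+1)
        have ht : y (n+1) < t := (hchar (n+1) le_rfl).mpr (by omega)
        have hmono := signed_mono hdiff ((-1:ℝ)^0) (convex_Ici (y (n+1))) (fun s hs => by
          rw [interior_Ici] at hs
          have h3 := key' s (n+1) le_rfl (fun k hk => by
            constructor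
            · intro _; omega
            · intro _
              calc z k < y (k+1) := (hzmem k hk).2.1
                _ ≤ y (n+1) := hyle _ _ (by omega) (by omega)
                _ < s := hs)
          simpa using h3)
        have h1 := hmono (mem_Ici.mpr le_rfl) (mem_Ici.mpr ht.le) ht.le
        simp only at h1
        rw [hy0 (n+1) le_rfl, mul_zero] at h1
        simpa [Nat.sub_self] using h1
      · -- 0 < j < n+2 : set i := j - 1
        obtain ⟨i, rfl⟩ : ∃ i, j = i + 1 := ⟨j - 1, by omega⟩
        have hin : i ≤ n := by omega
        have hyi : y i < t := (hchar i (by omega)).mpr (by omega)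
        have hti1 : t ≤ y (i+1) := le_of_not_gt (fun h => by
          have := (hchar (i+1) (by omega)).mp h; omega)
        rcases le_or_gt t (z i) with htz | htz
        · -- t ∈ (y i, z i]
          have hmono := signed_mono hdiff ((-1:ℝ)^(n+1-i)) (convex_Icc (y i) (z i))
            (fun s hs => by
              rw [interior_Icc] at hs
              exact key' s i (by omega) (fun k hk => by
                constructor
                · intro hzk
                  by_contra hki
                  have hik : i ≤ k := by omega
                  have hzik : z i ≤ z k := by
                    rcases eq_or_lt_of_le hik with h | h
                    · rw [← h]
                    · exact (hzmono i k h hk).le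
                  exact absurd (hzk.trans_le' hzik) (not_lt.mpr hs.2.le)
                · intro hki
                  calc z k < y (k+1) := (hzmem k hk).2.1
                    _ ≤ y i := hyle _ _ (by omega) (by omega)
                    _ < s := hs.1))
          have h1 := hmono (mem_Icc.mpr ⟨le_rfl, (hzmem i hin).1.le⟩)
            (mem_Icc.mpr ⟨hyi.le, htz⟩) hyi.le
          simp only at h1
          rw [hy0 i (by omega), mul_zero] at h1
          have he : (n+2-(i+1) : ℕ) = n+1-i := by omega
          rw [he]; exact h1
        · -- t ∈ (z i, y (i+1)]
          have hmono := signed_mono hdiff ((-1:ℝ)^(n-i)) (convex_Icc (z i) (y (i+1)))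
            (fun s hs => by
              rw [interior_Icc] at hs
              have h3 := key' s (i+1) (by omega) (fun k hk => by
                constructor
                · intro hzk
                  by_contra hki
                  have hik : i + 1 ≤ k := by omega
                  have : y (i+1) ≤ y k := hyle _ _ (by omega) (by omega)
                  exact absurd (((hzmem k hk).1.trans_le' this).trans' hs.2) (lt_asymm hzk)
                · intro hki
                  have hzki : z k ≤ z i := by
                    rcases eq_or_lt_of_le (Nat.lt_succ_iff.mp hki) with h | h
                    · rw [← h]
                    · exact (hzmono k i h hin).le
                  exact hzki.trans_lt hs.1)
              have he : (n+1-(i+1) : ℕ) = n-i := by omega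
              rwa [he] at h3)
          have h1 := hmono (mem_Icc.mpr ⟨htz.le, hti1⟩)
            (mem_Icc.mpr ⟨(hzmem i hin).2.1.le, le_rfl⟩) hti1
          simp only at h1
          rw [hy0 (i+1) (by omega), mul_zero] at h1
          have he : (n+2-(i+1) : ℕ) = (n-i)+1 := by omega
          rw [he, pow_succ]
          nlinarith [h1]

open Finset Set Filter Topology

-- index of t among the nodes
lemma exists_index (N : ℕ) (y : ℕ → ℝ) (hy : ∀ a b, a < b → b < N → y a < y b) (t : ℝ) :
    ∃ j ≤ N, ∀ k < N, (y k < t ↔ k < j) := by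
  classical
  by_cases hS : ((Finset.range N).filter (fun k => y k < t)).Nonempty
  · set S := (Finset.range N).filter (fun k => y k < t) with hSdef
    set K := S.max' hS with hK
    have hKS : K ∈ S := S.max'_mem hS
    have hKN : K < N := Finset.mem_range.mp (Finset.mem_filter.mp hKS).1
    refine ⟨K + 1, by omega, fun k hk => ?_⟩
    constructor
    · intro h
      have : k ∈ S := Finset.mem_filter.mpr ⟨Finset.mem_range.mpr hk, h⟩
      have := S.le_max' k this
      omega
    · intro h
      have hkK : k ≤ K := by omega
      have : y k ≤ y K := by
        rcases eq_or_lt_of_le hkK with rfl | h'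
        · exact le_rfl
        · exact (hy _ _ h' hKN).le
      exact this.trans_lt (Finset.mem_filter.mp hKS).2
  · refine ⟨0, by omega, fun k hk => ?_⟩
    constructor
    · intro h
      exact absurd (Finset.mem_filter.mpr ⟨Finset.mem_range.mpr hk, h⟩)
        (fun hm => hS ⟨k, hm⟩)
    · omega

-- cardinality of an initial segment of Fin N
lemma card_filter_val_lt (N j : ℕ) (hj : j ≤ N) :
    ((univ : Finset (Fin N)).filter (fun k : Fin N => (k : ℕ) < j)).card = j := by
  classical
  have : ((univ : Finset (Fin N)).filter (fun k : Fin N => (k : ℕ) < j))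
      = Finset.map ⟨Fin.castLE hj, (Fin.castLE_injective hj)⟩ univ := by
    ext k
    simp only [Finset.mem_filter, Finset.mem_univ, true_and, Finset.mem_map,
      Function.Embedding.coeFn_mk]
    constructor
    · intro h; exact ⟨⟨(k : ℕ), h⟩, rfl⟩
    · rintro ⟨a, -, rfl⟩; exact a.isLt
  rw [this, Finset.card_map, Finset.card_univ, Fintype.card_fin]

-- sign of the node product
lemma prod_sign (N j : ℕ) (y : ℕ → ℝ) (t : ℝ) (hj : j ≤ N)
    (hchar : ∀ k < N, (y k < t ↔ k < j)) :
    0 ≤ (-1 : ℝ) ^ (N - j) * ∏ k : Fin N, (t - y k) := by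
  classical
  rw [← Finset.prod_filter_mul_prod_filter_not univ (fun k : Fin N => (k : ℕ) < j)
    (fun k => t - y (k : ℕ))]
  have hA : 0 ≤ ∏ k ∈ (univ.filter (fun k : Fin N => (k : ℕ) < j)), (t - y (k : ℕ)) := by
    apply Finset.prod_nonneg
    intro k hk
    have := (Finset.mem_filter.mp hk).2
    have := (hchar k k.isLt).mpr this
    linarith
  have hcard : (univ.filter (fun k : Fin N => ¬ (k : ℕ) < j)).card = N - j := by
    have h1 := Finset.card_filter_add_card_filter_not
      (s := (univ : Finset (Fin N))) (p := fun k : Fin N => (k : ℕ) < j)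
    rw [card_filter_val_lt N j hj, Finset.card_univ, Fintype.card_fin] at h1
    omega
  have hB : 0 ≤ (-1 : ℝ) ^ (N - j) *
      ∏ k ∈ (univ.filter (fun k : Fin N => ¬ (k : ℕ) < j)), (t - y (k : ℕ)) := by
    have hrw : (-1 : ℝ) ^ (N - j) *
        ∏ k ∈ (univ.filter (fun k : Fin N => ¬ (k : ℕ) < j)), (t - y (k : ℕ))
        = ∏ k ∈ (univ.filter (fun k : Fin N => ¬ (k : ℕ) < j)), (y (k : ℕ) - t) := by
      rw [← hcard, ← Finset.prod_const (b := (-1 : ℝ)), ← Finset.prod_mul_distrib]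
      apply Finset.prod_congr rfl
      intro k _; ring
    rw [hrw]
    apply Finset.prod_nonneg
    intro k hk
    have hknj := (Finset.mem_filter.mp hk).2
    have := (hchar k k.isLt)
    have : ¬ y (k : ℕ) < t := fun h => hknj (this.mp h)
    linarith
  calc (0:ℝ) ≤ (∏ k ∈ (univ.filter (fun k : Fin N => (k : ℕ) < j)), (t - y (k : ℕ))) *
      ((-1 : ℝ) ^ (N - j) * ∏ k ∈ (univ.filter (fun k : Fin N => ¬ (k : ℕ) < j)), (t - y (k : ℕ)))
        := mul_nonneg hA hB
    _ = _ := by ring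

-- a solution must vanish at the nodes
lemma vanish_at_node {N : ℕ} (F : ℝ → ℝ) (hc : Continuous F) (x : Fin N → ℝ)
    (hinj : Function.Injective x)
    (hsign : ∀ t : ℝ, 0 ≤ F t * ∏ k : Fin N, (t - x k)) (k : Fin N) : F (x k) = 0 := by
  classical
  set Q : ℝ → ℝ := fun t => ∏ i ∈ univ.erase k, (t - x i) with hQ
  have hQcont : Continuous Q := by
    apply continuous_finset_prod
    intro i _
    exact continuous_id.sub continuous_const
  set φ : ℝ → ℝ := fun t => F t * Q t with hφ
  have hφcont : Continuous φ := hc.mul hQcont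
  have hkey : ∀ t, 0 ≤ φ t * (t - x k) := by
    intro t
    have h1 : ∏ i : Fin N, (t - x i) = (t - x k) * Q t :=
      (Finset.mul_prod_erase univ _ (Finset.mem_univ k)).symm
    have := hsign t
    rw [h1] at this
    calc (0:ℝ) ≤ F t * ((t - x k) * Q t) := this
      _ = φ t * (t - x k) := by rw [hφ]; ring
  have hright : 0 ≤ φ (x k) := by
    have hev : ∀ t ∈ Ioi (x k), 0 ≤ φ t := by
      intro t ht
      have h2 : (0:ℝ) < t - x k := by simpa [sub_pos] using ht
      nlinarith [hkey t]
    have htend : Tendsto φ (𝓝[>] (x k)) (𝓝 (φ (x k))) :=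
      (hφcont.continuousAt).continuousWithinAt
    exact ge_of_tendsto htend (eventually_nhdsWithin_of_forall hev)
  have hleft : φ (x k) ≤ 0 := by
    have hev : ∀ t ∈ Iio (x k), φ t ≤ 0 := by
      intro t ht
      have h2 : t - x k < 0 := by simpa [sub_neg] using ht
      nlinarith [hkey t]
    have htend : Tendsto φ (𝓝[<] (x k)) (𝓝 (φ (x k))) :=
      (hφcont.continuousAt).continuousWithinAt
    exact le_of_tendsto htend (eventually_nhdsWithin_of_forall hev)
  have hφ0 : φ (x k) = 0 := le_antisymm hleft hright
  have hQ0 : Q (x k) ≠ 0 := by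
    rw [hQ]
    apply Finset.prod_ne_zero_iff.mpr
    intro i hi
    have hik : x k ≠ x i := fun h => Finset.ne_of_mem_erase hi (hinj h.symm)
    exact sub_ne_zero.mpr hik
  have := hφ0
  rw [hφ] at this
  simp only at this
  rcases mul_eq_zero.mp this with h | h
  · exact h
  · exact absurd h hQ0
lemma iteratedDeriv_sub' {n : ℕ} {f g : ℝ → ℝ} (hf : ContDiff ℝ n f) (hg : ContDiff ℝ n g) :
    iteratedDeriv n (fun t => f t - g t) = fun t => iteratedDeriv n f t - iteratedDeriv n g t := by
  funext t
  have h := iteratedDerivWithin_sub (Set.mem_univ t) uniqueDiffOn_univ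
    hf.contDiffWithinAt hg.contDiffWithinAt
  simpa [iteratedDerivWithin_univ, Pi.sub_def] using h

theorem stmt_8 (f : ℝ → ℝ) (hf_cont : Continuous f) (hf_nonneg : ∀ t : ℝ, 0 ≤ f t)
    (m : ℕ) (hm : 1 ≤ m) (x : Fin m → ℝ) (hx : StrictMono x) :
    ∃! F : ℝ → ℝ, ContDiff ℝ m F ∧ iteratedDeriv m F = f ∧
      ∀ t : ℝ, 0 ≤ F t * ∏ k : Fin m, (t - x k) := by
  obtain ⟨n, rfl⟩ : ∃ n, m = n + 1 := ⟨m - 1, by omega⟩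
  classical
  set y : ℕ → ℝ := fun i => if h : i < n + 1 then x ⟨i, h⟩ else 0 with hydef
  have hyx : ∀ k : Fin (n+1), y (k : ℕ) = x k := by
    intro k
    simp only [hydef, dif_pos k.isLt, Fin.eta]
  have hymono : ∀ a b, a < b → b ≤ n → y a < y b := by
    intro a b hab hb
    simp only [hydef]
    rw [dif_pos (by omega : a < n+1), dif_pos (by omega : b < n+1)]
    exact hx (by exact_mod_cast hab)
  -- construction of F
  obtain ⟨hG₀c, hG₀cd, hG₀id⟩ := antider_contDiff hf_cont (n+1)
  set G₀ := antider f (n+1) with hG₀def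
  set p := Lagrange.interpolate univ x (fun k => G₀ (x k)) with hpdef
  have hinjOn : Set.InjOn x (univ : Finset (Fin (n+1))) := hx.injective.injOn
  set F : ℝ → ℝ := fun t => G₀ t - p.eval t with hFdef
  have hFcd : ContDiff ℝ (n+1 : ℕ) F := hG₀cd.sub (poly_contDiff p _)
  have hpdeg : p.natDegree < n + 1 := by
    by_cases hp : p = 0
    · rw [hp]; simpa using Nat.succ_pos n
    · have hdeg := Lagrange.degree_interpolate_lt (fun k => G₀ (x k)) hinjOn
      rw [Polynomial.natDegree_lt_iff_degree_lt hp]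
      simpa [hpdef] using hdeg
  have hFid : iteratedDeriv (n+1) F = f := by
    rw [hFdef, iteratedDeriv_sub' hG₀cd (poly_contDiff p _), hG₀id, poly_iteratedDeriv]
    funext t
    rw [Polynomial.iterate_derivative_eq_zero hpdeg]
    simp
  have hF0 : ∀ k ≤ n, F (y k) = 0 := by
    intro k hk
    have hyk : y k = x ⟨k, by omega⟩ := by simp only [hydef, dif_pos (by omega : k < n+1)]
    rw [hyk, hFdef]
    simp only
    rw [hpdef, Lagrange.eval_interpolate_at_node _ hinjOn (Finset.mem_univ ⟨k, by omega⟩)]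
    ring
  have hFnonneg : ∀ t, 0 ≤ iteratedDeriv (n+1) F t := fun t => by
    rw [hFid]; exact hf_nonneg t
  have hsq : ∀ j : ℕ, ((-1:ℝ)^j) * ((-1:ℝ)^j) = 1 := fun j => by
    rw [← mul_pow]; norm_num
  have hFsign : ∀ t : ℝ, 0 ≤ F t * ∏ k : Fin (n+1), (t - x k) := by
    intro t
    obtain ⟨j, hj, hchar⟩ := exists_index (n+1) y
      (fun a b hab hb => hymono a b hab (by omega)) t
    have h1 := keyLemma n F hFcd hFnonneg y hymono hF0 t j hj
      (fun k hk => hchar k (by omega))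
    have h2 := prod_sign (n+1) j y t hj hchar
    have hprod : (∏ k : Fin (n+1), (t - y (k:ℕ))) = ∏ k : Fin (n+1), (t - x k) :=
      Finset.prod_congr rfl (fun k _ => by rw [hyx k])
    rw [hprod] at h2
    calc (0:ℝ) ≤ ((-1:ℝ)^(n+1-j) * F t) * ((-1:ℝ)^(n+1-j) * ∏ k : Fin (n+1), (t - x k)) :=
          mul_nonneg h1 h2
      _ = (((-1:ℝ)^(n+1-j)) * ((-1:ℝ)^(n+1-j))) * (F t * ∏ k : Fin (n+1), (t - x k)) := by
          ring
      _ = F t * ∏ k : Fin (n+1), (t - x k) := by rw [hsq, one_mul]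
  refine ⟨F, ⟨hFcd, hFid, hFsign⟩, ?_⟩
  rintro F' ⟨hF'cd, hF'id, hF'sign⟩
  have hF'0 : ∀ k ≤ n, F' (y k) = 0 := by
    intro k hk
    have hyk : y k = x ⟨k, by omega⟩ := by simp only [hydef, dif_pos (by omega : k < n+1)]
    rw [hyk]
    exact vanish_at_node F' (hF'cd.continuous) x hx.injective hF'sign ⟨k, by omega⟩
  set D : ℝ → ℝ := fun s => F' s - F s with hDdef
  have hDcd : ContDiff ℝ (n+1 : ℕ) D := hF'cd.sub hFcd
  have hDid : ∀ t, iteratedDeriv (n+1) D t = 0 := by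
    intro t
    rw [hDdef, iteratedDeriv_sub' hF'cd hFcd]
    simp only
    rw [hF'id, hFid]
    ring
  have hD0 : ∀ k ≤ n, D (y k) = 0 := by
    intro k hk
    rw [hDdef]
    simp only
    rw [hF'0 k hk, hF0 k hk]
    ring
  have hDneg_cd : ContDiff ℝ (n+1 : ℕ) (fun s => -(D s)) := hDcd.neg
  have hDneg_id : ∀ t, iteratedDeriv (n+1) (fun s => -(D s)) t = 0 := by
    intro t
    rw [iteratedDeriv_fun_neg, hDid]
    ring
  funext t
  obtain ⟨j, hj, hchar⟩ := exists_index (n+1) y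
    (fun a b hab hb => hymono a b hab (by omega)) t
  have h1 := keyLemma n D hDcd (fun s => (hDid s).ge) y hymono hD0 t j hj
    (fun k hk => hchar k (by omega))
  have h2 := keyLemma n (fun s => -(D s)) hDneg_cd (fun s => (hDneg_id s).ge) y hymono
    (fun k hk => by show -(D (y k)) = 0; rw [hD0 k hk]; ring) t j hj (fun k hk => hchar k (by omega))
  have hne : ((-1:ℝ)^(n+1-j)) ≠ 0 := pow_ne_zero _ (by norm_num)
  have hD0t : D t = 0 := by
    have h2' : 0 ≤ (-1:ℝ)^(n+1-j) * (-(D t)) := h2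
    have hle : (-1:ℝ)^(n+1-j) * D t ≤ 0 := by nlinarith [h2']
    have := le_antisymm hle h1
    rcases mul_eq_zero.mp this with h | h
    · exact absurd h hne
    · exact h
  have : F' t - F t = 0 := hD0t
  linarith
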